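/- Let g(x) = (1 - 3x - √(1-6x+x²))/(4x²) be the generating function of the little Schröder numbers and let A(x) = 1/((1-x)(1-2x)). Then g(x)·A(x·g(x)) = 1/(1-6x) as formal power series. -/

import Mathlib

open PowerSeries

/-- Riordan-array identity: if `g` is the little Schröder generating function,
characterized by `g = 1 + 3x·g + 2x²·g²` (i.e. `g(x) = (1-3x-√(1-6x+x²))/(4x²)`),
and `A(x) = 1/((1-x)(1-2x))`, then `g(x)·A(x·g(x)) = 1/(1-6x)`. -/
theorem stmt_19 (g : PowerSeries ℚ)
    (hg : g = 1 + 3 * PowerSeries.X * g + 2 * PowerSeries.X ^ 2 * g ^ 2) :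
    g * (((1 - PowerSeries.X * g) * (1 - 2 * PowerSeries.X * g))⁻¹) =
      (1 - 6 * PowerSeries.X)⁻¹ := by
  have key : (1 - PowerSeries.X * g) * (1 - 2 * PowerSeries.X * g)
      = g * (1 - 6 * PowerSeries.X) := by
    have h2 : 2 * PowerSeries.X ^ 2 * g ^ 2 = g - 1 - 3 * PowerSeries.X * g := by
      nth_rewrite 2 [hg]; ring
    ring_nf
    ring_nf at h2
    linear_combination h2
  have hc : PowerSeries.constantCoeff (R := ℚ) g ≠ 0 := by
    have := congrArg (PowerSeries.constantCoeff (R := ℚ)) hg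
    simp at this
    simp [this]
  rw [key, PowerSeries.mul_inv_rev, ← mul_assoc, mul_right_comm, PowerSeries.mul_inv_cancel _ hc, one_mul]
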